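/- Let X be a real Banach space, F a norming subspace of X*, and σ the σ(X,F) topology. If a nonempty σ-closed, norm-bounded, convex set K ⊆ X is equal to the σ-closed convex hull of its set of farthest points b(K), then K has Property (R), i.e., every crescent of K contains a farthest point of K. -/

import Mathlib

open Metric Set Pointwise

/-- The farthest distance map `r_K(x) = sup {‖z - x‖ : z ∈ K}`. -/
noncomputable def rFar {X : Type*} [NormedAddCommGroup X] (K : Set X) (x : X) : ℝ :=
  sSup ((fun z => ‖z - x‖) '' K)

/-- `Q_K(x)`: the set of points of `K` farthest from `x`. -/
def QFar {X : Type*} [NormedAddCommGroup X] (K : Set X) (x : X) : Set X :=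
  {z ∈ K | ‖z - x‖ = rFar K x}

/-- `D(K)`: the set of points admitting a farthest point in `K`. -/
def DFar {X : Type*} [NormedAddCommGroup X] (K : Set X) : Set X :=
  {x | (QFar K x).Nonempty}

/-- `b(K)`: the set of farthest points of `K`. -/
def farPoints {X : Type*} [NormedAddCommGroup X] (K : Set X) : Set X :=
  ⋃ x ∈ DFar K, QFar K x

/-- The crescent `C(K, x, α) = {z ∈ K : ‖z - x‖ > r_K(x) - α}`. -/
def crescent {X : Type*} [NormedAddCommGroup X] (K : Set X) (x : X) (α : ℝ) : Set X :=
  {z ∈ K | rFar K x - α < ‖z - x‖}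

/-- Property (R): every crescent of `K` contains a farthest point of `K`. -/
def PropR {X : Type*} [NormedAddCommGroup X] (K : Set X) : Prop :=
  ∀ (x : X) (α : ℝ), 0 < α → ∃ z ∈ crescent K x α, z ∈ farPoints K

/-- The `σ(X,F)` topology on `X`: the topology induced by the functionals in `F`. -/
def sigmaTop {X : Type*} [NormedAddCommGroup X] [NormedSpace ℝ X]
    (F : Submodule ℝ (X →L[ℝ] ℝ)) : TopologicalSpace X :=
  TopologicalSpace.induced (fun x => fun f : F => (f : X →L[ℝ] ℝ) x) inferInstance

/-- `F` is a norming subspace of `X*`: `‖x‖ = sup {|f x| : f ∈ F, ‖f‖ ≤ 1}`. -/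
def IsNorming {X : Type*} [NormedAddCommGroup X] [NormedSpace ℝ X]
    (F : Submodule ℝ (X →L[ℝ] ℝ)) : Prop :=
  ∀ x : X, ‖x‖ = sSup {r : ℝ | ∃ f ∈ F, ‖f‖ ≤ 1 ∧ r = |f x|}

lemma sigma_cont {X : Type*} [NormedAddCommGroup X] [NormedSpace ℝ X]
    (F : Submodule ℝ (X →L[ℝ] ℝ)) {f : X →L[ℝ] ℝ} (hf : f ∈ F) :
    @Continuous X ℝ (sigmaTop F) _ fun z => f z := by
  letI := sigmaTop F
  have h1 : Continuous fun x : X => (fun g : F => g.1 x) :=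
    continuous_induced_dom
  exact (continuous_apply (⟨f, hf⟩ : F)).comp h1

lemma norming_norm_le {X : Type*} [NormedAddCommGroup X] [NormedSpace ℝ X]
    {F : Submodule ℝ (X →L[ℝ] ℝ)} (hF : IsNorming F) (y : X) (c : ℝ) :
    ‖y‖ ≤ c ↔ ∀ f ∈ F, ‖f‖ ≤ 1 → |f y| ≤ c := by
  constructor
  · intro h f hf hf1
    calc |f y| = ‖f y‖ := (Real.norm_eq_abs _).symm
      _ ≤ ‖f‖ * ‖y‖ := f.le_opNorm y
      _ ≤ 1 * ‖y‖ := mul_le_mul_of_nonneg_right hf1 (norm_nonneg y)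
      _ = ‖y‖ := one_mul _
      _ ≤ c := h
  · intro h
    have hc : 0 ≤ c := by
      have := h 0 (Submodule.zero_mem F) (by simp)
      simpa using this
    rw [hF y]
    apply Real.sSup_le _ hc
    rintro r ⟨f, hf, hf1, rfl⟩
    exact h f hf hf1

/-- Theorem far, (a) ⟹ (b)(ii): if a nonempty σ-closed bounded convex set equals the
σ-closed convex hull of its farthest points, then it has Property (R). -/
theorem stmt_4 {X : Type*} [NormedAddCommGroup X] [NormedSpace ℝ X] [CompleteSpace X]
    (F : Submodule ℝ (X →L[ℝ] ℝ)) (hF : IsNorming F)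
    (K : Set X) (hne : K.Nonempty) (hKc : @IsClosed X (sigmaTop F) K)
    (hKb : Bornology.IsBounded K) (hKconv : Convex ℝ K)
    (h : K = @closure X (sigmaTop F) (convexHull ℝ (farPoints K))) :
    PropR K := by
  intro x α hα
  by_contra hco
  push_neg at hco
  set r := rFar K x with hr
  -- the set b(K) is contained in the closed ball S
  set S : Set X := {z | ‖z - x‖ ≤ r - α} with hS
  have hfarsub : farPoints K ⊆ S := by
    intro w hw
    have hwK : w ∈ K := by
      simp only [farPoints, mem_iUnion] at hw
      obtain ⟨y, _, hwQ⟩ := hw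
      exact hwQ.1
    by_contra hws
    have hlt : r - α < ‖w - x‖ := lt_of_not_ge hws
    exact hco w ⟨hwK, hlt⟩ hw
  -- S is convex
  have hSconv : Convex ℝ S := by
    have : S = Metric.closedBall x (r - α) := by
      ext z
      simp [hS, Metric.mem_closedBall, dist_eq_norm]
    rw [this]
    exact convex_closedBall x (r - α)
  -- S is σ-closed
  have hSclosed : @IsClosed X (sigmaTop F) S := by
    have hSeq : S = ⋂ f : {f : X →L[ℝ] ℝ // f ∈ F ∧ ‖f‖ ≤ 1},
        {z : X | |f.1 (z - x)| ≤ r - α} := by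
      ext z
      simp only [hS, mem_setOf_eq, mem_iInter, Subtype.forall]
      rw [norming_norm_le hF (z - x) (r - α)]
      constructor
      · intro hz f hf; exact hz f hf.1 hf.2
      · intro hz f hf hf1; exact hz f ⟨hf, hf1⟩
    rw [hSeq]
    letI := sigmaTop F
    refine isClosed_iInter fun f => ?_
    have hc1 : Continuous fun z : X => f.1 z := sigma_cont F f.2.1
    have hc2 : Continuous fun z : X => |f.1 (z - x)| := by
      have : (fun z : X => |f.1 (z - x)|) = fun z : X => |f.1 z - f.1 x| := by
        funext z; rw [map_sub]
      rw [this]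
      exact (hc1.sub continuous_const).abs
    exact isClosed_le hc2 continuous_const
  -- hence K ⊆ S
  have hKS : K ⊆ S := by
    conv_lhs => rw [h]
    exact @closure_minimal X (sigmaTop F) _ _
      (convexHull_min hfarsub hSconv) hSclosed
  -- but the sup r is attained arbitrarily closely
  have himg : ((fun z => ‖z - x‖) '' K).Nonempty := hne.image _
  obtain ⟨a, ha, hlt⟩ := exists_lt_of_lt_csSup himg
    (show r - α < sSup ((fun z => ‖z - x‖) '' K) from by
      rw [← rFar, ← hr]; exact sub_lt_self r hα)
  obtain ⟨z, hzK, rfl⟩ := ha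
  exact absurd (hKS hzK) (not_le.mpr hlt)
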